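/- Let G be a 3-connected graph, C a cycle in G with V(C) ≠ V(G) such that G[V(C)] consists of C plus a matching of chords, and let x, y be two distinct vertices of degree 2 in G[V(C)]. Then the set of degree-2 vertices of G[V(C)] other than x and y is nonempty. -/

import Mathlib

open SimpleGraph

/-- A graph is 3-connected if it has at least 4 vertices and removing any set of at
most 2 vertices leaves it connected. -/
def ThreeConnected {V : Type*} [Fintype V] [DecidableEq V] (G : SimpleGraph V) : Prop :=
  4 ≤ Fintype.card V ∧
    ∀ S : Finset V, S.card ≤ 2 →
      (G.comap (Subtype.val : {w : V // w ∉ S} → V)).Connected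

/-- In a cycle based at `v`, the vertex `v` has two distinct neighbors along the cycle. -/
private lemma cycle_start_two_nbrs {V : Type*} {G : SimpleGraph V} {v : V}
    (d : G.Walk v v) (hd : d.IsCycle) :
    ∃ a b, a ≠ b ∧ s(v, a) ∈ d.edges ∧ s(v, b) ∈ d.edges := by
  obtain ⟨a, ha, p, rfl⟩ := Walk.not_nil_iff.mp hd.not_nil
  have hlen := hd.three_le_length
  have hpne : ¬ p.reverse.Nil := by
    rw [Walk.not_nil_iff_lt_length, Walk.length_reverse]
    simp only [Walk.length_cons] at hlen
    omega
  obtain ⟨b, hb, q, hq⟩ := Walk.not_nil_iff.mp hpne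
  have hbe : s(v, b) ∈ p.edges := by
    have h1 : s(v, b) ∈ p.reverse.edges := by rw [hq]; simp
    rwa [Walk.edges_reverse, List.mem_reverse] at h1
  have hnodup := hd.isCircuit.isTrail.edges_nodup
  refine ⟨a, b, ?_, by simp, by simp [hbe]⟩
  rintro rfl
  rw [Walk.edges_cons] at hnodup
  exact (List.nodup_cons.mp hnodup).1 hbe

/-- Any vertex of a cycle has two distinct neighbors along the cycle. -/
private lemma cycle_two_nbrs {V : Type*} [DecidableEq V] {G : SimpleGraph V} {u : V}
    (c : G.Walk u u) (hc : c.IsCycle) {v : V} (hv : v ∈ c.support) :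
    ∃ a b, a ≠ b ∧ s(v, a) ∈ c.edges ∧ s(v, b) ∈ c.edges := by
  obtain ⟨a, b, hab, hea, heb⟩ := cycle_start_two_nbrs (c.rotate v hv) (hc.rotate hv)
  have hmem : ∀ e, e ∈ (c.rotate v hv).edges ↔ e ∈ c.edges :=
    fun e => (c.rotate_edges v hv).mem_iff
  exact ⟨a, b, hab, (hmem _).mp hea, (hmem _).mp heb⟩

/-- Let `G` be a 3-connected (cubic) graph and `c` a cycle with `V(c) ≠ V(G)` such
that the induced subgraph on `V(c)` is `c` plus a matching of chords (each vertex of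
`c` lies on at most one chord).  If `x` and `y` are two distinct degree-2 vertices of
`G[V(c)]` (vertices on `c` incident with no chord), then there is a degree-2 vertex
of `G[V(c)]` other than `x` and `y`. -/
theorem third_boundary_vertex {V : Type*} [Fintype V] [DecidableEq V]
    (G : SimpleGraph V) (h3 : ThreeConnected G)
    (hcubic : ∀ v : V, (G.neighborSet v).ncard = 3)
    (u : V) (c : G.Walk u u) (hc : c.IsCycle)
    (hS : {v : V | v ∈ c.support} ≠ Set.univ)
    (hmatching : ∀ v ∈ c.support,
      Set.Subsingleton {w : V | w ∈ c.support ∧ G.Adj v w ∧ s(v, w) ∉ c.edges})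
    (x y : V) (hx : x ∈ c.support) (hy : y ∈ c.support) (hxy : x ≠ y)
    (hx2 : ∀ w ∈ c.support, G.Adj x w → s(x, w) ∈ c.edges)
    (hy2 : ∀ w ∈ c.support, G.Adj y w → s(y, w) ∈ c.edges) :
    ∃ z ∈ c.support, z ≠ x ∧ z ≠ y ∧
      ∀ w ∈ c.support, G.Adj z w → s(z, w) ∈ c.edges := by
  classical
  by_contra hcon
  push_neg at hcon
  -- every vertex of the cycle other than x, y has all its neighbors on the cycle
  have key : ∀ v ∈ c.support, v ≠ x → v ≠ y → ∀ w, G.Adj v w → w ∈ c.support := by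
    intro v hvs hvx hvy w hw
    obtain ⟨a, b, hab, hea, heb⟩ := cycle_two_nbrs c hc hvs
    obtain ⟨w0, hw0s, hw0a, hw0e⟩ := hcon v hvs hvx hvy
    have hw0a' : a ≠ w0 := fun h => hw0e (h ▸ hea)
    have hw0b' : b ≠ w0 := fun h => hw0e (h ▸ heb)
    have hNsub : ({a, b, w0} : Set V) ⊆ G.neighborSet v := by
      rintro t (rfl | rfl | rfl)
      · exact (G.mem_edgeSet).mp (c.edges_subset_edgeSet hea)
      · exact (G.mem_edgeSet).mp (c.edges_subset_edgeSet heb)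
      · exact hw0a
    have hcard : ({a, b, w0} : Set V).ncard = 3 :=
      Set.ncard_eq_three.mpr ⟨a, b, w0, hab, hw0a', hw0b', rfl⟩
    have hEq : ({a, b, w0} : Set V) = G.neighborSet v :=
      Set.eq_of_subset_of_ncard_le hNsub (by rw [hcubic v, hcard]) (Set.toFinite _)
    have hwmem : w ∈ ({a, b, w0} : Set V) := hEq ▸ hw
    rcases hwmem with rfl | rfl | rfl
    · exact c.snd_mem_support_of_mem_edges hea
    · exact c.snd_mem_support_of_mem_edges heb
    · exact hw0s
  -- pick a third vertex z of the cycle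
  set S : Finset V := {x, y} with hSdef
  have hScard : S.card ≤ 2 := (Finset.card_insert_le _ _).trans (by simp)
  have hz : ∃ z ∈ c.support, z ≠ x ∧ z ≠ y := by
    have htn : c.support.tail.Nodup := hc.support_nodup
    have htlen : c.support.tail.length = c.length := by
      have := c.length_support
      simp [List.length_tail, this]
    have hcardt : c.support.tail.toFinset.card = c.length := by
      rw [List.toFinset_card_of_nodup htn, htlen]
    have h3l := hc.three_le_length
    have hpos : 0 < (c.support.tail.toFinset \ S).card := by
      have h1 := Finset.le_card_sdiff S c.support.tail.toFinset
      omega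
    obtain ⟨z, hzm⟩ := Finset.card_pos.mp hpos
    rw [Finset.mem_sdiff] at hzm
    refine ⟨z, List.mem_of_mem_tail (List.mem_toFinset.mp hzm.1), ?_, ?_⟩ <;>
      · intro h; exact hzm.2 (by simp [hSdef, h])
  obtain ⟨z, hzs, hzx, hzy⟩ := hz
  obtain ⟨p0, hp0⟩ := Set.ne_univ_iff_exists_notMem _ |>.mp hS
  have hzS : z ∉ S := by simp [hSdef, hzx, hzy]
  have hp0S : p0 ∉ S := by
    simp only [hSdef, Finset.mem_insert, Finset.mem_singleton]
    rintro (rfl | rfl) <;> exact hp0 ‹_ ∈ c.support›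
  obtain ⟨_, hconn⟩ := h3
  obtain ⟨W⟩ := (hconn S hScard).preconnected ⟨z, hzS⟩ ⟨p0, hp0S⟩
  have inv : ∀ (a b : {w : V // w ∉ S})
      (W : (G.comap (Subtype.val : {w : V // w ∉ S} → V)).Walk a b),
      (a : V) ∈ c.support → (b : V) ∈ c.support := by
    intro a b W
    induction W with
    | nil => exact id
    | @cons a a' b h q ih =>
      intro ha
      have haS := a.prop
      simp only [hSdef, Finset.mem_insert, Finset.mem_singleton, not_or] at haS
      have h' : G.Adj (a : V) (a' : V) := h
      exact ih (key (a : V) ha haS.1 haS.2 (a' : V) h')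
  exact hp0 (inv _ _ W hzs)
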